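/- Let 1 ≤ ℓ ≤ r be integers, let X be a set, and let F ⊆ P(X^r) be a family of subsets of X^r. If VC_ℓ(F) = d < ∞, then there exist constants C = C(d) and ε = ε(d) > 0 such that for all m ∈ ℕ, π_ℓ(F, m) ≤ C·2^{m^{ℓ-ε}}. -/

import Mathlib

set_option maxHeartbeats 1000000


open FirstOrder Set Function Filter

universe u v w

namespace PaperVC

/-- `𝔸` is an `(ℓ,t)`-box of height `m` in `X`: it is a concatenation product `A₁ ⋯ A_ℓ` of sets
`A_i ⊆ X^{k_i}` (`k_i ≥ 1`, `k₁+⋯+k_ℓ = t`); the fibers of a monotone surjection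
`c : Fin t → Fin ℓ` encode the consecutive blocks of coordinates, and each `A_i` has size `m`.
By convention a `(0,t)`-box with `t ≥ 1` is a singleton, and a `(0,0)`-box is the empty set. -/
def IsBoxOfHeight (X : Type*) (ℓ t m : ℕ) (𝔸 : Set (Fin t → X)) : Prop :=
  (ℓ = 0 ∧ t = 0 ∧ 𝔸 = ∅) ∨
  (ℓ = 0 ∧ 0 < t ∧ ∃ b, 𝔸 = {b}) ∨
  (0 < ℓ ∧ ∃ c : Fin t → Fin ℓ, Monotone c ∧ Function.Surjective c ∧
    ∃ A : (i : Fin ℓ) → Set ({j : Fin t // c j = i} → X),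
      (∀ i, (A i).Finite ∧ (A i).ncard = m) ∧
      𝔸 = { b | ∀ i, (fun j : {j : Fin t // c j = i} => b j.1) ∈ A i })

/-- The underlying set of a set of tuples: the set of all coordinates of its tuples. -/
def underlying {X : Type*} {t : ℕ} (𝔹 : Set (Fin t → X)) : Set X :=
  { x | ∃ b ∈ 𝔹, ∃ j, b j = x }

/-- A family `F` of subsets of `Y` shatters `A ⊆ Y` if every subset of `A` is cut out by a
member of `F`. -/
def Shatters {Y : Type*} (F : Set (Set Y)) (A : Set Y) : Prop :=
  ∀ B ⊆ A, ∃ S ∈ F, S ∩ A = B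

/-- `VC_ℓ(F)` for a family `F` of subsets of `X^r`, as an extended natural number:
the supremum of the heights of `(ℓ,r)`-boxes in `X` shattered by `F`. -/
noncomputable def VCell (X : Type*) (ℓ r : ℕ) (F : Set (Set (Fin r → X))) : ℕ∞ :=
  sSup { N : ℕ∞ | ∃ m : ℕ, N = (m : ℕ∞) ∧
    ∃ 𝔸 : Set (Fin r → X), IsBoxOfHeight X ℓ r m 𝔸 ∧ Shatters F 𝔸 }

section AuxLemmas
open Real Finset

/-- Young-type: `b*y ≤ y^q + b^(q/(q-1))` for `q > 1`. -/
lemma young_aux {b y q : ℝ} (hb : 0 ≤ b) (hy : 0 ≤ y) (hq : 1 < q) :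
    b * y ≤ y ^ q + b ^ (q / (q - 1)) := by
  have hq1 : (0:ℝ) < q - 1 := by linarith
  rcases eq_or_lt_of_le hy with h0 | hy0
  · simp only [← h0, mul_zero]
    positivity
  rcases le_or_gt b (y ^ (q - 1)) with h | h
  · have : b * y ≤ y ^ (q - 1) * y := by
      exact mul_le_mul_of_nonneg_right h (le_of_lt hy0)
    have hyq : y ^ (q - 1) * y = y ^ q := by
      rw [← Real.rpow_add_one (ne_of_gt hy0)]
      ring_nf
    nlinarith [Real.rpow_nonneg hb (q / (q - 1))]
  · have hb0 : 0 < b := lt_of_le_of_lt (Real.rpow_nonneg (le_of_lt hy0) _) h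
    have hyb : y < b ^ (1 / (q - 1)) := by
      have := Real.rpow_lt_rpow (Real.rpow_nonneg (le_of_lt hy0) _) h
        (by positivity : (0:ℝ) < 1 / (q - 1))
      rwa [← Real.rpow_mul (le_of_lt hy0), mul_one_div, div_self (ne_of_gt hq1),
        Real.rpow_one] at this
    have : b * y ≤ b * b ^ (1 / (q - 1)) :=
      mul_le_mul_of_nonneg_left (le_of_lt hyb) hb
    have hbq : b * b ^ (1 / (q - 1)) = b ^ (q / (q - 1)) := by
      rw [mul_comm, ← Real.rpow_add_one (ne_of_gt hb0)]
      congr 1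
      field_simp
      ring
    have : b * y ≤ b ^ (q / (q - 1)) := by rw [← hbq]; exact this
    nlinarith [Real.rpow_nonneg (le_of_lt hy0) q]

/-- Lower bound for binomial coefficients: `(x/(2n))^n ≤ C(x,n)` for `x ≥ 2n ≥ 2`. -/
lemma lb_choose {n x : ℕ} (hn : 1 ≤ n) (hx : 2 * n ≤ x) :
    ((x : ℝ) / (2 * n)) ^ n ≤ (x.choose n : ℝ) := by
  have hfact : ((x + 1 - n : ℕ) ^ n : ℝ) / (n.factorial : ℝ) ≤ (x.choose n : ℝ) :=
    Nat.pow_le_choose n x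
  have h1 : ((x : ℝ) / 2) ≤ ((x + 1 - n : ℕ) : ℝ) := by
    have hnx : n ≤ x := le_trans (by omega) hx
    have : ((x + 1 - n : ℕ) : ℝ) = (x : ℝ) + 1 - n := by
      have : n ≤ x + 1 := by omega
      push_cast [Nat.cast_sub this]
      ring
    rw [this]
    have : (2 * n : ℝ) ≤ (x : ℝ) := by exact_mod_cast hx
    linarith
  have h2 : ((n.factorial : ℝ)) ≤ (n : ℝ) ^ n := by exact_mod_cast Nat.factorial_le_pow n
  have hn0 : (0:ℝ) < n := by exact_mod_cast hn
  have hx0 : (0:ℝ) ≤ (x:ℝ) / 2 := by positivity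
  calc ((x : ℝ) / (2 * n)) ^ n = ((x:ℝ)/2) ^ n / (n:ℝ) ^ n := by
        rw [div_pow, div_pow, mul_pow]
        rw [div_div]
      _ ≤ (((x + 1 - n : ℕ)) : ℝ) ^ n / (n.factorial : ℝ) := by
        apply div_le_div₀ (by positivity) (pow_le_pow_left₀ hx0 h1 n)
          (by exact_mod_cast Nat.factorial_pos n) h2
      _ ≤ (x.choose n : ℝ) := by exact_mod_cast hfact


lemma card_powerset_filter_le {α : Type*} [DecidableEq α] (s : Finset α) (k : ℕ)
    (hk : k ≤ s.card) :
    (s.powerset.filter (fun t => t.card ≤ k)).card ≤ (s.card + 1) ^ (k + 1) := by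
  have hsub : s.powerset.filter (fun t => t.card ≤ k) ⊆
      (Finset.range (k+1)).biUnion (fun i => s.powersetCard i) := by
    intro t ht
    simp only [Finset.mem_filter, Finset.mem_powerset] at ht
    simp only [Finset.mem_biUnion, Finset.mem_range, Finset.mem_powersetCard]
    exact ⟨t.card, by omega, ht.1, rfl⟩
  calc (s.powerset.filter (fun t => t.card ≤ k)).card
      ≤ ((Finset.range (k+1)).biUnion (fun i => s.powersetCard i)).card :=
        Finset.card_le_card hsub
    _ ≤ ∑ i ∈ Finset.range (k+1), (s.powersetCard i).card := Finset.card_biUnion_le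
    _ ≤ ∑ i ∈ Finset.range (k+1), (s.card + 1) ^ k := by
        apply Finset.sum_le_sum
        intro i hi
        simp only [Finset.mem_range] at hi
        rw [Finset.card_powersetCard]
        calc s.card.choose i ≤ s.card ^ i := Nat.choose_le_pow _ _
          _ ≤ (s.card + 1) ^ i := Nat.pow_le_pow_left (by omega) i
          _ ≤ (s.card + 1) ^ k := Nat.pow_le_pow_right (by omega) (by omega)
    _ = (k + 1) * (s.card + 1) ^ k := by rw [Finset.sum_const, Finset.card_range, smul_eq_mul]
    _ ≤ (s.card + 1) * (s.card + 1) ^ k := Nat.mul_le_mul_right _ (by omega)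
    _ = (s.card + 1) ^ (k + 1) := by ring

lemma final_analytic (ℓ : ℕ) (hℓ : 1 ≤ ℓ) (c δ : ℝ) (hc : 1 ≤ c) (hδ : 0 < δ) (hδ1 : δ ≤ 1) :
    ∃ C : ℝ, 1 ≤ C ∧ ∀ m : ℕ,
      (c * (m:ℝ) ^ ((ℓ:ℝ) - δ) + 1) * Real.logb 2 ((m:ℝ) ^ (ℓ:ℕ) + 1) ≤
        (m:ℝ) ^ ((ℓ:ℝ) - δ/2) + Real.logb 2 C := by
  have hℓ1 : (1:ℝ) ≤ (ℓ:ℝ) := by exact_mod_cast hℓ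
  set s : ℝ := δ/4 with hs
  have hs0 : 0 < s := by positivity
  have hlog2 : (0:ℝ) < Real.log 2 := Real.log_pos (by norm_num)
  set a : ℝ := (ℓ:ℝ) / (s * Real.log 2) with ha
  have ha0 : 0 < a := by positivity
  set b : ℝ := (c + 1) * (1 + a) with hb
  have hb0 : (0:ℝ) < b := by positivity
  set q : ℝ := ((ℓ:ℝ) - δ/2) / ((ℓ:ℝ) - 3*δ/4) with hq
  have hden : (0:ℝ) < (ℓ:ℝ) - 3*δ/4 := by linarith
  have hq1 : 1 < q := by
    rw [hq, lt_div_iff₀ hden]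
    linarith
  refine ⟨Real.exp (Real.log 2 * b ^ (q / (q - 1))), ?_, ?_⟩
  · rw [← Real.exp_zero]
    apply Real.exp_le_exp.2
    positivity
  intro m
  have hCval : Real.logb 2 (Real.exp (Real.log 2 * b ^ (q / (q - 1)))) = b ^ (q / (q - 1)) := by
    rw [Real.logb, Real.log_exp]
    field_simp
  rw [hCval]
  rcases Nat.eq_zero_or_pos m with rfl | hm
  · have h1 : ((0:ℕ):ℝ) ^ (ℓ:ℕ) = 0 := by
      simp [zero_pow (by omega : ℓ ≠ 0)]
    rw [h1]
    norm_num
    positivity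
  have hm1 : (1:ℝ) ≤ (m:ℝ) := by exact_mod_cast hm
  have hx1 : (1:ℝ) ≤ (m:ℝ) ^ (ℓ:ℕ) := one_le_pow₀ hm1
  -- log bound
  have hlogb : Real.logb 2 ((m:ℝ) ^ (ℓ:ℕ) + 1) ≤ (1 + a) * (m:ℝ) ^ s := by
    have h2 : (m:ℝ) ^ (ℓ:ℕ) + 1 ≤ 2 * (m:ℝ) ^ (ℓ:ℕ) := by linarith
    have h3 : Real.logb 2 ((m:ℝ) ^ (ℓ:ℕ) + 1) ≤ Real.logb 2 (2 * (m:ℝ) ^ (ℓ:ℕ)) :=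
      Real.logb_le_logb_of_le (by norm_num) (by linarith) h2
    have h4 : Real.logb 2 (2 * (m:ℝ) ^ (ℓ:ℕ)) = 1 + (ℓ:ℕ) * Real.logb 2 (m:ℝ) := by
      rw [Real.logb_mul (by norm_num) (by positivity), Real.logb_self_eq_one (by norm_num),
        Real.logb_pow]
    have h5 : Real.logb 2 (m:ℝ) ≤ (m:ℝ) ^ s / (s * Real.log 2) := by
      rw [Real.logb, div_le_div_iff₀ hlog2 (by positivity)]
      calc Real.log (m:ℝ) * (s * Real.log 2) = (Real.log (m:ℝ) * s) * Real.log 2 := by ring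
        _ ≤ (m:ℝ) ^ s * Real.log 2 := by
            apply mul_le_mul_of_nonneg_right _ (le_of_lt hlog2)
            have := Real.log_le_rpow_div (by positivity : (0:ℝ) ≤ (m:ℝ)) hs0
            rw [div_eq_mul_inv] at this
            calc Real.log (m:ℝ) * s ≤ ((m:ℝ) ^ s * s⁻¹) * s := by
                  apply mul_le_mul_of_nonneg_right this (le_of_lt hs0)
              _ = (m:ℝ) ^ s := by field_simp
    have hms1 : (1:ℝ) ≤ (m:ℝ) ^ s := Real.one_le_rpow hm1 (le_of_lt hs0)
    calc Real.logb 2 ((m:ℝ) ^ (ℓ:ℕ) + 1) ≤ 1 + (ℓ:ℕ) * Real.logb 2 (m:ℝ) := h4 ▸ h3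
      _ ≤ 1 + (ℓ:ℝ) * ((m:ℝ) ^ s / (s * Real.log 2)) := by
          apply add_le_add le_rfl
          apply mul_le_mul_of_nonneg_left h5 (by positivity)
      _ = 1 + a * (m:ℝ) ^ s := by rw [ha]; ring
      _ ≤ (1 + a) * (m:ℝ) ^ s := by nlinarith
  -- factor bound
  have hfac : c * (m:ℝ) ^ ((ℓ:ℝ) - δ) + 1 ≤ (c + 1) * (m:ℝ) ^ ((ℓ:ℝ) - δ) := by
    have : (1:ℝ) ≤ (m:ℝ) ^ ((ℓ:ℝ) - δ) := Real.one_le_rpow hm1 (by linarith)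
    nlinarith
  have hmain : (c * (m:ℝ) ^ ((ℓ:ℝ) - δ) + 1) * Real.logb 2 ((m:ℝ) ^ (ℓ:ℕ) + 1) ≤
      b * (m:ℝ) ^ ((ℓ:ℝ) - 3*δ/4) := by
    have hL0 : 0 ≤ Real.logb 2 ((m:ℝ) ^ (ℓ:ℕ) + 1) := Real.logb_nonneg (by norm_num) (by linarith)
    have hf0 : 0 ≤ c * (m:ℝ) ^ ((ℓ:ℝ) - δ) + 1 := by positivity
    calc (c * (m:ℝ) ^ ((ℓ:ℝ) - δ) + 1) * Real.logb 2 ((m:ℝ) ^ (ℓ:ℕ) + 1)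
        ≤ ((c + 1) * (m:ℝ) ^ ((ℓ:ℝ) - δ)) * ((1 + a) * (m:ℝ) ^ s) := by
          apply mul_le_mul hfac hlogb hL0 (by positivity)
      _ = b * ((m:ℝ) ^ ((ℓ:ℝ) - δ) * (m:ℝ) ^ s) := by rw [hb]; ring
      _ = b * (m:ℝ) ^ ((ℓ:ℝ) - 3*δ/4) := by
          rw [← Real.rpow_add (by positivity : (0:ℝ) < (m:ℝ))]
          congr 1
          rw [hs]; ring
  have hyoung : b * (m:ℝ) ^ ((ℓ:ℝ) - 3*δ/4) ≤ (m:ℝ) ^ ((ℓ:ℝ) - δ/2) + b ^ (q / (q - 1)) := by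
    have := young_aux (b := b) (y := (m:ℝ) ^ ((ℓ:ℝ) - 3*δ/4)) (q := q) (le_of_lt hb0)
      (Real.rpow_nonneg (by positivity) ((ℓ:ℝ) - 3*δ/4)) hq1
    have hyq : ((m:ℝ) ^ ((ℓ:ℝ) - 3*δ/4)) ^ q = (m:ℝ) ^ ((ℓ:ℝ) - δ/2) := by
      rw [← Real.rpow_mul (by positivity : (0:ℝ) ≤ (m:ℝ))]
      congr 1
      rw [hq, mul_comm ((ℓ:ℝ) - 3*δ/4), div_mul_cancel₀ _ (ne_of_gt hden)]
    rw [hyq] at this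
    exact this
  linarith


theorem box_bound (n : ℕ) (hn : 1 ≤ n) (ℓ : ℕ) :
    ∃ c δ : ℝ, 0 < δ ∧ δ ≤ 1 ∧ 1 ≤ c ∧
      ∀ (γ : Type v) (A : Fin ℓ → Finset γ) (m : ℕ), (∀ i, (A i).card ≤ m) →
      ∀ D : Finset (Fin ℓ → γ), D ⊆ Fintype.piFinset A →
      (∀ S : Fin ℓ → Finset γ, (∀ i, S i ⊆ A i) → (∀ i, (S i).card = n) →
        ¬ Fintype.piFinset S ⊆ D) →
      (D.card : ℝ) ≤ c * (m:ℝ) ^ ((ℓ:ℝ) - δ) := by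
  induction ℓ with
  | zero =>
    refine ⟨1, 1, one_pos, le_refl 1, le_refl 1, ?_⟩
    intro γ A m hA D hD hbox
    have h0 : ¬ Fintype.piFinset (fun _ : Fin 0 => (∅ : Finset γ)) ⊆ D :=
      hbox _ (fun i => i.elim0) (fun i => i.elim0)
    have hDe : D = ∅ := by
      by_contra h
      apply h0
      intro f _
      obtain ⟨g, hg⟩ := Finset.nonempty_iff_ne_empty.2 h
      have : f = g := funext fun i => i.elim0
      rwa [this]
    rw [hDe]
    simp only [Finset.card_empty, Nat.cast_zero]
    positivity
  | succ ℓ IH =>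
    classical
    obtain ⟨c, δ, hδ0, hδ1, hc1, IH⟩ := IH
    have hn0 : (0:ℝ) < n := by exact_mod_cast hn
    have hn1 : (1:ℝ) ≤ n := by exact_mod_cast hn
    have hc0 : (0:ℝ) < c := by linarith
    set c1 : ℝ := 2 * (4*(n:ℝ))^n * c with hc1def
    have hc1pos : 0 < c1 := by positivity
    set c' : ℝ := max (max 1 (4*(n:ℝ))) (c1 ^ (1/((n:ℝ)+1))) with hc'def
    have hc'1 : (1:ℝ) ≤ c' := le_max_of_le_left (le_max_left _ _)
    have hc'4n : 4*(n:ℝ) ≤ c' := le_max_of_le_left (le_max_right _ _)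
    have hc'c1 : c1 ^ (1/((n:ℝ)+1)) ≤ c' := le_max_right _ _
    set δ' : ℝ := δ/((n:ℝ)+1) with hδ'def
    have hδ'0 : 0 < δ' := by positivity
    have hδ'1 : δ' ≤ 1 := by
      rw [hδ'def, div_le_one (by positivity)]
      linarith
    refine ⟨c', δ', hδ'0, hδ'1, hc'1, ?_⟩
    intro γ A m hA D hD hbox
    rcases Nat.eq_zero_or_pos m with rfl | hm
    · have hDe : D = ∅ := by
        rw [Finset.eq_empty_iff_forall_notMem]
        intro f hf
        have h1 := Fintype.mem_piFinset.1 (hD hf) 0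
        have hA0 : A 0 = ∅ := Finset.card_eq_zero.1 (Nat.le_zero.1 (hA 0))
        rw [hA0] at h1
        exact absurd h1 (Finset.notMem_empty _)
      rw [hDe]
      simp only [Finset.card_empty, Nat.cast_zero]
      positivity
    set R : ℝ := (m:ℝ) with hRdef
    have hR1 : (1:ℝ) ≤ R := by rw [hRdef]; exact_mod_cast hm
    have hR0 : (0:ℝ) < R := by linarith
    set Alast := A (Fin.last ℓ) with hAlast
    set B := Fintype.piFinset (fun i : Fin ℓ => A i.castSucc) with hBdef
    set deg : (Fin ℓ → γ) → ℕ :=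
      fun b => (Alast.filter (fun a => Fin.snoc b a ∈ D)).card with hdeg
    -- Step 1 : card of D as sum of degrees
    have hmaps : ∀ f ∈ D, Fin.init f ∈ B := by
      intro f hf
      rw [hBdef, Fintype.mem_piFinset]
      intro i
      exact Fintype.mem_piFinset.1 (hD hf) i.castSucc
    have hsum : D.card = ∑ b ∈ B, deg b := by
      rw [Finset.card_eq_sum_card_fiberwise hmaps]
      apply Finset.sum_congr rfl
      intro b _
      simp only [hdeg]
      apply Finset.card_bij (fun f _ => f (Fin.last ℓ))
      · intro f hf
        rw [Finset.mem_filter] at hf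
        refine Finset.mem_filter.2 ⟨Fintype.mem_piFinset.1 (hD hf.1) (Fin.last ℓ), ?_⟩
        rw [← hf.2, Fin.snoc_init_self]
        exact hf.1
      · intro f hf g hg hfg
        rw [Finset.mem_filter] at hf hg
        have : Fin.snoc (Fin.init f) (f (Fin.last ℓ)) =
            Fin.snoc (Fin.init g) (g (Fin.last ℓ)) := by rw [hf.2, hg.2, hfg]
        rwa [Fin.snoc_init_self, Fin.snoc_init_self] at this
      · intro a ha
        rw [Finset.mem_filter] at ha
        exact ⟨Fin.snoc b a, Finset.mem_filter.2 ⟨ha.2, by simp⟩, by simp⟩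
    set fib : Finset γ → Finset (Fin ℓ → γ) :=
      fun T => B.filter (fun b => ∀ a ∈ T, Fin.snoc b a ∈ D) with hfib
    -- Step 2 : double counting
    have hcount : ∑ T ∈ Alast.powersetCard n, (fib T).card = ∑ b ∈ B, (deg b).choose n := by
      calc ∑ T ∈ Alast.powersetCard n, (fib T).card
          = ∑ T ∈ Alast.powersetCard n, ∑ b ∈ B,
              (if (∀ a ∈ T, Fin.snoc b a ∈ D) then 1 else 0) := by
            exact Finset.sum_congr rfl (fun T _ => Finset.card_filter _ _)
        _ = ∑ b ∈ B, ∑ T ∈ Alast.powersetCard n,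
              (if (∀ a ∈ T, Fin.snoc b a ∈ D) then 1 else 0) := Finset.sum_comm
        _ = ∑ b ∈ B, (deg b).choose n := by
            apply Finset.sum_congr rfl
            intro b _
            rw [← Finset.card_filter]
            have heq : (Alast.powersetCard n).filter (fun T => ∀ a ∈ T, Fin.snoc b a ∈ D)
                = (Alast.filter (fun a => Fin.snoc b a ∈ D)).powersetCard n := by
              ext T
              simp only [Finset.mem_filter, Finset.mem_powersetCard]
              constructor
              · rintro ⟨⟨hTA, hTc⟩, hTD⟩
                exact ⟨fun x hx => Finset.mem_filter.2 ⟨hTA hx, hTD x hx⟩, hTc⟩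
              · rintro ⟨hTsub, hTc⟩
                exact ⟨⟨fun x hx => (Finset.mem_filter.1 (hTsub hx)).1, hTc⟩,
                  fun a ha => (Finset.mem_filter.1 (hTsub ha)).2⟩
            rw [heq, Finset.card_powersetCard]
    -- Step 3 : per-fiber bound from the inductive hypothesis
    have hfibb : ∀ T ∈ Alast.powersetCard n, ((fib T).card : ℝ) ≤ c * R ^ ((ℓ:ℝ) - δ) := by
      intro T hT
      rw [Finset.mem_powersetCard] at hT
      apply IH γ (fun i => A i.castSucc) m (fun i => hA _) (fib T) (Finset.filter_subset _ _)
      intro S hS hScard hSsub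
      refine hbox (Fin.snoc S T) ?_ ?_ ?_
      · intro i
        refine Fin.lastCases ?_ ?_ i
        · rw [Fin.snoc_last]; exact hT.1
        · intro j; rw [Fin.snoc_castSucc]; exact hS j
      · intro i
        refine Fin.lastCases ?_ ?_ i
        · rw [Fin.snoc_last]; exact hT.2
        · intro j; rw [Fin.snoc_castSucc]; exact hScard j
      · intro f hf
        have hf' := Fintype.mem_piFinset.1 hf
        have hb : Fin.init f ∈ Fintype.piFinset S := Fintype.mem_piFinset.2 (fun j => by
          have := hf' j.castSucc
          rwa [Fin.snoc_castSucc] at this)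
        have hbfib := hSsub hb
        simp only [hfib, Finset.mem_filter] at hbfib
        have hlast : f (Fin.last ℓ) ∈ T := by
          have := hf' (Fin.last ℓ)
          rwa [Fin.snoc_last] at this
        have := hbfib.2 _ hlast
        rwa [Fin.snoc_init_self] at this
    -- numeric part
    set E : ℝ := (D.card : ℝ) with hEdef
    have hgoalexp : (((ℓ+1 : ℕ)):ℝ) - δ' = ((ℓ:ℝ) + 1) - δ' := by push_cast; ring
    rw [hgoalexp]
    by_cases hEsmall : E ≤ 4*n*R^((ℓ:ℕ):ℝ)
    · have h1 : R^((ℓ:ℕ):ℝ) ≤ R^(((ℓ:ℝ)+1) - δ') := by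
        apply Real.rpow_le_rpow_of_exponent_le hR1
        push_cast
        linarith
      calc E ≤ 4*n*R^((ℓ:ℕ):ℝ) := hEsmall
        _ ≤ c' * R^(((ℓ:ℝ)+1) - δ') := mul_le_mul hc'4n h1 (by positivity) (by linarith)
    · push_neg at hEsmall
      set Mr : ℝ := (B.card : ℝ) with hMrdef
      have hMr_le : Mr ≤ R^((ℓ:ℕ):ℝ) := by
        have h1 : B.card ≤ m^ℓ := by
          rw [hBdef, Fintype.card_piFinset]
          calc ∏ i : Fin ℓ, (A i.castSucc).card ≤ ∏ _i : Fin ℓ, m :=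
              Finset.prod_le_prod (fun _ _ => Nat.zero_le _) (fun i _ => hA _)
            _ = m^ℓ := by rw [Finset.prod_const, Finset.card_univ, Fintype.card_fin]
        calc Mr ≤ ((m^ℓ : ℕ):ℝ) := by rw [hMrdef]; exact_mod_cast h1
          _ = R^((ℓ:ℕ):ℝ) := by rw [Real.rpow_natCast]; push_cast; ring
      have hRl1 : (1:ℝ) ≤ R^((ℓ:ℕ):ℝ) := Real.one_le_rpow hR1 (by positivity)
      have hE0 : 0 < E := by
        have h4 : (0:ℝ) < 4*n*R^((ℓ:ℕ):ℝ) := by positivity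
        linarith
      have hMr0 : 0 < Mr := by
        rcases Finset.eq_empty_or_nonempty B with hBe | hBne
        · exfalso
          rw [hBe, Finset.sum_empty] at hsum
          rw [hEdef, hsum] at hE0
          norm_num at hE0
        · rw [hMrdef]
          exact_mod_cast Finset.card_pos.2 hBne
      have hE4nMr : 4*n*Mr < E := by
        calc 4*n*Mr ≤ 4*n*R^((ℓ:ℕ):ℝ) := by
              apply mul_le_mul_of_nonneg_left hMr_le (by positivity)
          _ < E := hEsmall
      set B' := B.filter (fun b => E ≤ 2*Mr*(deg b)) with hB'def
      have hEsum : E = ∑ b ∈ B, ((deg b : ℕ):ℝ) := by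
        rw [hEdef, hsum]
        push_cast
        rfl
      have hsmallsum : ∑ b ∈ B.filter (fun b => ¬(E ≤ 2*Mr*(deg b))), ((deg b:ℕ):ℝ) ≤ E/2 := by
        have hcb : ((B.filter (fun b => ¬(E ≤ 2*Mr*(deg b)))).card : ℝ) ≤ Mr := by
          rw [hMrdef]
          exact_mod_cast Finset.card_le_card (Finset.filter_subset _ _)
        calc ∑ b ∈ B.filter (fun b => ¬(E ≤ 2*Mr*(deg b))), ((deg b:ℕ):ℝ)
            ≤ ∑ _b ∈ B.filter (fun b => ¬(E ≤ 2*Mr*(deg b))), E/(2*Mr) := by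
              apply Finset.sum_le_sum
              intro b hb
              have h2 := (Finset.mem_filter.1 hb).2
              push_neg at h2
              rw [le_div_iff₀ (by positivity)]
              nlinarith
          _ = ((B.filter (fun b => ¬(E ≤ 2*Mr*(deg b)))).card : ℝ) * (E/(2*Mr)) := by
              rw [Finset.sum_const, nsmul_eq_mul]
          _ ≤ Mr * (E/(2*Mr)) := by
              apply mul_le_mul_of_nonneg_right hcb (by positivity)
          _ = E/2 := by
              rw [mul_div_assoc', mul_comm 2 Mr, mul_div_mul_left _ _ (ne_of_gt hMr0)]
      have hbigsum : E/2 ≤ ∑ b ∈ B', ((deg b:ℕ):ℝ) := by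
        have hparts := Finset.sum_filter_add_sum_filter_not B (fun b => E ≤ 2*Mr*(deg b))
          (fun b => ((deg b:ℕ):ℝ))
        rw [← hB'def] at hparts
        rw [← hparts] at hEsum
        linarith
      have hdegm : ∀ b, ((deg b : ℕ) : ℝ) ≤ R := by
        intro b
        have h1 : deg b ≤ Alast.card := Finset.card_le_card (Finset.filter_subset _ _)
        have h2 : deg b ≤ m := le_trans h1 (hA _)
        rw [hRdef]
        exact_mod_cast h2
      have hB'card : E/2 ≤ (B'.card : ℝ) * R := by
        calc E/2 ≤ ∑ b ∈ B', ((deg b:ℕ):ℝ) := hbigsum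
          _ ≤ ∑ _b ∈ B', R := Finset.sum_le_sum (fun b _ => hdegm b)
          _ = (B'.card : ℝ) * R := by rw [Finset.sum_const, nsmul_eq_mul]
      have hdegbig : ∀ b ∈ B', (E/(4*n*Mr))^n ≤ ((deg b).choose n : ℝ) := by
        intro b hb
        have hbE := (Finset.mem_filter.1 hb).2
        have h2nR : 2*(n:ℝ) < ((deg b : ℕ):ℝ) := by nlinarith
        have h2n : 2*n ≤ deg b := by exact_mod_cast h2nR.le
        calc (E/(4*n*Mr))^n ≤ (((deg b : ℕ) : ℝ)/(2*n))^n := by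
              apply pow_le_pow_left₀ (by positivity)
              rw [div_le_div_iff₀ (by positivity) (by positivity)]
              nlinarith
          _ ≤ ((deg b).choose n : ℝ) := lb_choose hn h2n
      have hchain : (B'.card : ℝ) * (E/(4*n*Mr))^n ≤ R^((n:ℕ):ℝ) * (c * R^((ℓ:ℝ)-δ)) := by
        calc (B'.card : ℝ) * (E/(4*n*Mr))^n = ∑ _b ∈ B', (E/(4*n*Mr))^n := by
              rw [Finset.sum_const, nsmul_eq_mul]
          _ ≤ ∑ b ∈ B', ((deg b).choose n : ℝ) := Finset.sum_le_sum hdegbig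
          _ ≤ ∑ b ∈ B, ((deg b).choose n : ℝ) := by
              apply Finset.sum_le_sum_of_subset_of_nonneg (Finset.filter_subset _ _)
              intro b _ _
              positivity
          _ = ∑ T ∈ Alast.powersetCard n, ((fib T).card : ℝ) := by
              rw [← Nat.cast_sum, ← Nat.cast_sum, hcount]
          _ ≤ ∑ _T ∈ Alast.powersetCard n, (c * R^((ℓ:ℝ)-δ)) := Finset.sum_le_sum hfibb
          _ = ((Alast.powersetCard n).card : ℝ) * (c * R^((ℓ:ℝ)-δ)) := by
              rw [Finset.sum_const, nsmul_eq_mul]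
          _ ≤ R^((n:ℕ):ℝ) * (c * R^((ℓ:ℝ)-δ)) := by
              apply mul_le_mul_of_nonneg_right _ (by positivity)
              rw [Finset.card_powersetCard]
              calc ((Alast.card.choose n : ℕ):ℝ) ≤ ((Alast.card^n : ℕ):ℝ) := by
                    exact_mod_cast Nat.choose_le_pow _ _
                _ ≤ ((m^n : ℕ):ℝ) := by exact_mod_cast Nat.pow_le_pow_left (hA _) n
                _ = R^((n:ℕ):ℝ) := by rw [Real.rpow_natCast]; push_cast; ring
      -- assemble E^(n+1) bound
      have hMrn : Mr^n ≤ R^((ℓ:ℝ)*(n:ℝ)) := by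
        calc Mr^n ≤ (R^((ℓ:ℕ):ℝ))^n := pow_le_pow_left₀ (le_of_lt hMr0) hMr_le n
          _ = R^((ℓ:ℝ)*(n:ℝ)) := by
              rw [← Real.rpow_natCast (R^((ℓ:ℕ):ℝ)) n, ← Real.rpow_mul (le_of_lt hR0)]
      have hfinal : E^(n+1) ≤ c1 * R^(((n:ℝ)+1)*((ℓ:ℝ)+1) - δ) := by
        have hle : E/(2*R) ≤ (B'.card : ℝ) := by
          rw [div_le_iff₀ (by positivity)]
          nlinarith
        have hkey : (E/(2*R)) * (E/(4*n*Mr))^n ≤ R^((n:ℕ):ℝ) * (c * R^((ℓ:ℝ)-δ)) :=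
          le_trans (mul_le_mul_of_nonneg_right hle (by positivity)) hchain
        have hexp : (E/(2*R)) * (E/(4*n*Mr))^n = E^(n+1) / ((2*R)*(4*n*Mr)^n) := by
          rw [div_pow]
          field_simp
          ring
        rw [hexp, div_le_iff₀ (by positivity)] at hkey
        calc E^(n+1) ≤ R^((n:ℕ):ℝ) * (c * R^((ℓ:ℝ)-δ)) * ((2*R)*(4*n*Mr)^n) := hkey
          _ = (2*(4*(n:ℝ))^n*c) * (Mr^n * (R * (R^((n:ℕ):ℝ) * R^((ℓ:ℝ)-δ)))) := by
              rw [mul_pow]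
              ring
          _ ≤ (2*(4*(n:ℝ))^n*c) * (R^((ℓ:ℝ)*(n:ℝ)) * (R * (R^((n:ℕ):ℝ) * R^((ℓ:ℝ)-δ)))) := by
              apply mul_le_mul_of_nonneg_left _ (by positivity)
              apply mul_le_mul_of_nonneg_right hMrn (by positivity)
          _ = c1 * R^(((n:ℝ)+1)*((ℓ:ℝ)+1) - δ) := by
              rw [hc1def]
              congr 1
              nth_rewrite 2 [← Real.rpow_one R]
              rw [← Real.rpow_add hR0, ← Real.rpow_add hR0, ← Real.rpow_add hR0]
              congr 1
              push_cast
              ring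
      -- take (n+1)-st root
      have hq' : (0:ℝ) < (n:ℝ)+1 := by positivity
      have hroot : E ≤ c1 ^ (1/((n:ℝ)+1)) * R ^ (((ℓ:ℝ)+1) - δ') := by
        have h1 : (E^(n+1)) ^ (1/((n:ℝ)+1)) ≤
            (c1 * R^(((n:ℝ)+1)*((ℓ:ℝ)+1) - δ)) ^ (1/((n:ℝ)+1)) :=
          Real.rpow_le_rpow (by positivity) hfinal (by positivity)
        have h2 : (E^(n+1)) ^ (1/((n:ℝ)+1)) = E := by
          rw [← Real.rpow_natCast E (n+1), ← Real.rpow_mul (le_of_lt hE0)]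
          push_cast
          rw [mul_one_div, div_self (ne_of_gt hq'), Real.rpow_one]
        have h3 : (c1 * R^(((n:ℝ)+1)*((ℓ:ℝ)+1) - δ)) ^ (1/((n:ℝ)+1))
            = c1 ^ (1/((n:ℝ)+1)) * R ^ (((ℓ:ℝ)+1) - δ') := by
          rw [Real.mul_rpow (le_of_lt hc1pos) (by positivity),
            ← Real.rpow_mul (le_of_lt hR0)]
          congr 2
          rw [hδ'def]
          field_simp
        rw [h2, h3] at h1
        exact h1
      calc E ≤ c1 ^ (1/((n:ℝ)+1)) * R ^ (((ℓ:ℝ)+1) - δ') := hroot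
        _ ≤ c' * R ^ (((ℓ:ℝ)+1) - δ') :=
            mul_le_mul_of_nonneg_right hc'c1 (Real.rpow_nonneg (le_of_lt hR0) _)


end AuxLemmas

/-- **Theorem 2.4** (Chernikov–Palacin–Takeuchi, adapted).  Let `1 ≤ ℓ ≤ r`, let `X` be a set
and `F ⊆ P(X^r)`.  If `VC_ℓ(F) = d < ∞`, then there are constants `C = C(d)` and
`ε = ε(d) > 0` such that for all `m`, `π_ℓ(F,m) ≤ C·2^(m^(ℓ-ε))`, i.e. for every `(ℓ,r)`-box
`𝔸` of height `m`, `|{G ∩ 𝔸 : G ∈ F}| ≤ C·2^(m^(ℓ-ε))`. -/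
theorem statement3 (ℓ r : ℕ) (hℓ : 1 ≤ ℓ) (hℓr : ℓ ≤ r) (d : ℕ) :
    ∃ C ε : ℝ, 0 < ε ∧ ∀ (X : Type u) (F : Set (Set (Fin r → X))),
      VCell X ℓ r F = (d : ℕ∞) →
      ∀ (m : ℕ) (𝔸 : Set (Fin r → X)), IsBoxOfHeight X ℓ r m 𝔸 →
        (Nat.card { S : Set (Fin r → X) | ∃ G ∈ F, G ∩ 𝔸 = S } : ℝ) ≤
          C * 2 ^ ((m : ℝ) ^ ((ℓ : ℝ) - ε)) := by
  classical
  obtain ⟨c, δ, hδ0, hδ1, hc1, hboxthm⟩ := box_bound.{u} (d+1) (by omega) ℓ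
  obtain ⟨C, hC1, hanal⟩ := final_analytic ℓ hℓ c δ hc1 hδ0 hδ1
  refine ⟨C, δ/2, by positivity, ?_⟩
  intro X F hVC m 𝔸 hbox𝔸
  rcases hbox𝔸 with ⟨h0, -⟩ | ⟨h0, -⟩ | ⟨hℓpos, cmap, hmono, hsurj, A, hA, h𝔸⟩
  · omega
  · omega
  -- encoding into a single type
  set γ : Type u := Fin r → Option X with hγ
  set enc : (i : Fin ℓ) → ({j : Fin r // cmap j = i} → X) → γ :=
    fun i p j => if h : cmap j = i then some (p ⟨j, h⟩) else none with henc
  set φ : (Fin r → X) → (Fin ℓ → γ) := fun b i => enc i (fun j => b j.1) with hφ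
  have hφinj : Function.Injective φ := by
    intro b b' h
    funext j
    have h1 := congrFun (congrFun h (cmap j)) j
    simp only [hφ, henc, dif_pos rfl] at h1
    exact Option.some_injective _ h1
  have hencinj : ∀ i, Function.Injective (enc i) := by
    intro i p p' h
    funext j
    have h1 := congrFun h j.1
    simp only [henc, j.2, dif_pos] at h1
    exact Option.some_injective _ h1
  set Afin : Fin ℓ → Finset γ := fun i => ((hA i).1.toFinset).image (enc i) with hAfin
  have hAfincard : ∀ i, (Afin i).card = m := by
    intro i
    rw [hAfin]
    rw [Finset.card_image_of_injective _ (hencinj i)]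
    rw [← Set.ncard_eq_toFinset_card _ (hA i).1]
    exact (hA i).2
  have hmem𝔸 : ∀ b ∈ 𝔸, ∀ i, φ b i ∈ Afin i := by
    intro b hb i
    rw [h𝔸] at hb
    exact Finset.mem_image.2 ⟨_, (hA i).1.mem_toFinset.2 (hb i), rfl⟩
  have h𝔸fin : 𝔸.Finite := by
    apply Set.Finite.of_finite_image _ (hφinj.injOn)
    apply Set.Finite.subset (Fintype.piFinset Afin).finite_toSet
    rintro _ ⟨b, hb, rfl⟩
    exact Finset.mem_coe.2 (Fintype.mem_piFinset.2 (hmem𝔸 b hb))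
  set 𝔸f : Finset (Fin r → X) := h𝔸fin.toFinset with h𝔸f
  have h𝔸fmem : ∀ b, b ∈ 𝔸f ↔ b ∈ 𝔸 := fun b => h𝔸fin.mem_toFinset
  set N := 𝔸f.card with hN
  have hNle : N ≤ m^ℓ := by
    have h1 : 𝔸f.card ≤ (Fintype.piFinset Afin).card := by
      apply Finset.card_le_card_of_injOn φ
      · intro b hb
        exact Fintype.mem_piFinset.2 (hmem𝔸 b ((h𝔸fmem b).1 hb))
      · exact hφinj.injOn
    calc N ≤ (Fintype.piFinset Afin).card := h1
      _ = m^ℓ := by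
          rw [Fintype.card_piFinset]
          calc ∏ i, (Afin i).card = ∏ _i : Fin ℓ, m :=
              Finset.prod_congr rfl (fun i _ => hAfincard i)
            _ = m^ℓ := by rw [Finset.prod_const, Finset.card_univ, Fintype.card_fin]
  set 𝒜 : Finset (Finset (Fin r → X)) :=
    𝔸f.powerset.filter (fun u => ∃ G ∈ F, G ∩ 𝔸 = ↑u) with h𝒜
  -- trace count ≤ 𝒜.card
  have hsub𝔸 : ∀ S : Set (Fin r → X), (∃ G ∈ F, G ∩ 𝔸 = S) → S ⊆ 𝔸 := by
    rintro S ⟨G, hGF, rfl⟩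
    exact Set.inter_subset_right
  have hfin' : ∀ S : Set (Fin r → X), (∃ G ∈ F, G ∩ 𝔸 = S) → S.Finite :=
    fun S h => h𝔸fin.subset (hsub𝔸 S h)
  have htrace : Nat.card { S : Set (Fin r → X) | ∃ G ∈ F, G ∩ 𝔸 = S } ≤ 𝒜.card := by
    have hmap : ∀ S : { S : Set (Fin r → X) | ∃ G ∈ F, G ∩ 𝔸 = S },
        (hfin' S.1 S.2).toFinset ∈ 𝒜 := by
      intro S
      refine Finset.mem_filter.2 ⟨Finset.mem_powerset.2 ?_, ?_⟩
      · intro x hx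
        rw [Set.Finite.mem_toFinset] at hx
        exact (h𝔸fmem x).2 (hsub𝔸 _ S.2 hx)
      · obtain ⟨G, hGF, hS⟩ := S.2
        exact ⟨G, hGF, by rw [Set.Finite.coe_toFinset]; exact hS⟩
    have hinj : Function.Injective
        (fun S : { S : Set (Fin r → X) | ∃ G ∈ F, G ∩ 𝔸 = S } =>
          (⟨(hfin' S.1 S.2).toFinset, hmap S⟩ : {u // u ∈ 𝒜})) := by
      intro S S' hSS
      apply Subtype.ext
      have h1 := congrArg (fun u : {u // u ∈ 𝒜} => ((u : Finset (Fin r → X)) : Set (Fin r → X))) hSS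
      simpa [Set.Finite.coe_toFinset] using h1
    calc Nat.card { S : Set (Fin r → X) | ∃ G ∈ F, G ∩ 𝔸 = S } ≤ Nat.card {u // u ∈ 𝒜} :=
        Nat.card_le_card_of_injective _ hinj
      _ = 𝒜.card := Nat.card_eq_finsetCard 𝒜
  -- every set shattered by the traces is small
  set K : ℕ := min (Nat.floor (c * (m:ℝ)^((ℓ:ℝ)-δ))) N with hK
  have hshat : ∀ t ∈ 𝒜.shatterer, t ⊆ 𝔸f ∧ t.card ≤ K := by
    intro t ht
    rw [Finset.mem_shatterer] at ht
    have htsub : t ⊆ 𝔸f := by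
      obtain ⟨u, hu, htu⟩ := ht.exists_superset
      exact htu.trans (Finset.mem_powerset.1 (Finset.mem_filter.1 hu).1)
    have ht𝔸 : (↑t : Set (Fin r → X)) ⊆ 𝔸 := by
      intro x hx
      exact (h𝔸fmem x).1 (htsub hx)
    -- Set-level shattering of ↑t by F
    have htset : ∀ Bs ⊆ (↑t : Set (Fin r → X)), ∃ G ∈ F, G ∩ ↑t = Bs := by
      intro Bs hBs
      have hucoe : ((t.filter (fun x => x ∈ Bs) : Finset (Fin r → X)) : Set (Fin r → X)) = Bs := by
        ext x
        simp only [Finset.coe_filter, Set.mem_setOf_eq]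
        exact ⟨fun h => h.2, fun h => ⟨Finset.mem_coe.1 (hBs h), h⟩⟩
      obtain ⟨v, hv𝒜, htv⟩ := ht (Finset.filter_subset (fun x => x ∈ Bs) t)
      obtain ⟨G, hGF, hG𝔸⟩ := (Finset.mem_filter.1 hv𝒜).2
      refine ⟨G, hGF, ?_⟩
      calc G ∩ ↑t = (G ∩ 𝔸) ∩ ↑t := by
            ext x
            exact ⟨fun ⟨h1, h2⟩ => ⟨⟨h1, ht𝔸 h2⟩, h2⟩, fun ⟨⟨h1, _⟩, h2⟩ => ⟨h1, h2⟩⟩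
        _ = ↑v ∩ ↑t := by rw [hG𝔸]
        _ = ↑(t ∩ v) := by rw [← Finset.coe_inter, Finset.inter_comm]
        _ = Bs := by rw [htv, hucoe]
    -- the image of t under φ contains no (d+1)-box
    have himg : (t.image φ) ⊆ Fintype.piFinset Afin := by
      intro x hx
      obtain ⟨b, hb, rfl⟩ := Finset.mem_image.1 hx
      exact Fintype.mem_piFinset.2 (hmem𝔸 b (ht𝔸 hb))
    have hnobox : ∀ S : Fin ℓ → Finset γ, (∀ i, S i ⊆ Afin i) → (∀ i, (S i).card = d+1) →
        ¬ Fintype.piFinset S ⊆ t.image φ := by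
      intro S hS hScard hsub
      set T : (i : Fin ℓ) → Finset ({j : Fin r // cmap j = i} → X) :=
        fun i => ((hA i).1.toFinset).filter (fun p => enc i p ∈ S i) with hT
      have hTimg : ∀ i, (T i).image (enc i) = S i := by
        intro i
        apply Finset.Subset.antisymm
        · intro x hx
          obtain ⟨p, hp, rfl⟩ := Finset.mem_image.1 hx
          exact (Finset.mem_filter.1 hp).2
        · intro x hx
          obtain ⟨p, hp, rfl⟩ := Finset.mem_image.1 (hS i hx)
          exact Finset.mem_image.2 ⟨p, Finset.mem_filter.2 ⟨hp, hx⟩, rfl⟩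
      have hTcard : ∀ i, (T i).card = d+1 := by
        intro i
        rw [← hScard i, ← hTimg i, Finset.card_image_of_injective _ (hencinj i)]
      set 𝔹 : Set (Fin r → X) :=
        {b | ∀ i, (fun j : {j : Fin r // cmap j = i} => b j.1) ∈ (↑(T i) : Set _)} with h𝔹
      have h𝔹box : IsBoxOfHeight X ℓ r (d+1) 𝔹 :=
        Or.inr (Or.inr ⟨hℓpos, cmap, hmono, hsurj, fun i => ↑(T i),
          fun i => ⟨(T i).finite_toSet, by rw [Set.ncard_coe_finset]; exact hTcard i⟩, rfl⟩)
      have h𝔹t : 𝔹 ⊆ ↑t := by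
        intro b hb
        have hφmem : φ b ∈ Fintype.piFinset S := by
          refine Fintype.mem_piFinset.2 (fun i => ?_)
          rw [← hTimg i]
          exact Finset.mem_image.2 ⟨_, Finset.mem_coe.1 (hb i), rfl⟩
        obtain ⟨b', hb', hbb'⟩ := Finset.mem_image.1 (hsub hφmem)
        rwa [← hφinj hbb']
      have hshat𝔹 : Shatters F 𝔹 := by
        intro Bs hBs
        obtain ⟨G, hGF, hGt⟩ := htset Bs (hBs.trans h𝔹t)
        refine ⟨G, hGF, ?_⟩
        calc G ∩ 𝔹 = (G ∩ ↑t) ∩ 𝔹 := by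
              ext x
              exact ⟨fun ⟨h1, h2⟩ => ⟨⟨h1, h𝔹t h2⟩, h2⟩, fun ⟨⟨h1, _⟩, h2⟩ => ⟨h1, h2⟩⟩
          _ = Bs ∩ 𝔹 := by rw [hGt]
          _ = Bs := by
              ext x
              exact ⟨fun h => h.1, fun h => ⟨h, hBs h⟩⟩
      have hle : ((d+1 : ℕ) : ℕ∞) ≤ VCell X ℓ r F := by
        have hVCdef : VCell X ℓ r F = sSup { N : ℕ∞ | ∃ m' : ℕ, N = (m' : ℕ∞) ∧
            ∃ 𝔸' : Set (Fin r → X), IsBoxOfHeight X ℓ r m' 𝔸' ∧ Shatters F 𝔸' } := rfl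
        rw [hVCdef]
        exact le_sSup ⟨d+1, rfl, 𝔹, h𝔹box, hshat𝔹⟩
      rw [hVC] at hle
      have : d+1 ≤ d := by exact_mod_cast hle
      omega
    have hcardle := hboxthm γ Afin m (fun i => le_of_eq (hAfincard i)) (t.image φ) himg hnobox
    rw [Finset.card_image_of_injective _ hφinj] at hcardle
    refine ⟨htsub, le_min (Nat.le_floor hcardle) ?_⟩
    rw [hN]
    exact Finset.card_le_card htsub
  -- counting
  have hsub2 : 𝒜.shatterer ⊆ 𝔸f.powerset.filter (fun t => t.card ≤ K) := by
    intro t ht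
    exact Finset.mem_filter.2 ⟨Finset.mem_powerset.2 (hshat t ht).1, (hshat t ht).2⟩
  have hcard2 : 𝒜.card ≤ (N+1)^(K+1) := by
    calc 𝒜.card ≤ 𝒜.shatterer.card := Finset.card_le_card_shatterer 𝒜
      _ ≤ (𝔸f.powerset.filter (fun t => t.card ≤ K)).card := Finset.card_le_card hsub2
      _ ≤ (N+1)^(K+1) := card_powerset_filter_le 𝔸f K (min_le_right _ _)
  -- final numeric computation
  have hcount : Nat.card { S : Set (Fin r → X) | ∃ G ∈ F, G ∩ 𝔸 = S } ≤ (N+1)^(K+1) :=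
    le_trans htrace hcard2
  set x : ℝ := (m:ℝ)^(ℓ:ℕ) + 1 with hx
  have hx1 : (1:ℝ) ≤ x := by
    rw [hx]
    have : (0:ℝ) ≤ (m:ℝ)^(ℓ:ℕ) := by positivity
    linarith
  have hx0 : (0:ℝ) < x := by linarith
  have hNx : ((N+1:ℕ):ℝ) ≤ x := by
    rw [hx]
    push_cast
    have : (N:ℝ) ≤ (m:ℝ)^(ℓ:ℕ) := by exact_mod_cast hNle
    linarith
  have hstep1 : (((N+1)^(K+1) : ℕ) : ℝ) ≤ x^(K+1) := by
    have hNx' : ((N:ℝ)+1) ≤ x := by push_cast at hNx ⊢; exact hNx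
    push_cast
    exact pow_le_pow_left₀ (by positivity) hNx' _
  have hlogid : x^(K+1) = (2:ℝ)^((((K+1):ℕ):ℝ) * Real.logb 2 x) := by
    rw [mul_comm, Real.rpow_mul (by norm_num : (0:ℝ) ≤ 2), Real.rpow_logb (by norm_num)
      (by norm_num) hx0, Real.rpow_natCast]
  have hKle : (((K+1):ℕ):ℝ) ≤ c * (m:ℝ)^((ℓ:ℝ)-δ) + 1 := by
    push_cast
    have h1 : (K:ℝ) ≤ c * (m:ℝ)^((ℓ:ℝ)-δ) := by
      have h2 : K ≤ Nat.floor (c * (m:ℝ)^((ℓ:ℝ)-δ)) := min_le_left _ _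
      calc (K:ℝ) ≤ (Nat.floor (c * (m:ℝ)^((ℓ:ℝ)-δ)) : ℝ) := by exact_mod_cast h2
        _ ≤ c * (m:ℝ)^((ℓ:ℝ)-δ) := Nat.floor_le (by positivity)
    linarith
  have hL0 : 0 ≤ Real.logb 2 x := Real.logb_nonneg (by norm_num) hx1
  have hexpb : (((K+1):ℕ):ℝ) * Real.logb 2 x ≤ (m:ℝ)^((ℓ:ℝ)-δ/2) + Real.logb 2 C := by
    calc (((K+1):ℕ):ℝ) * Real.logb 2 x ≤ (c * (m:ℝ)^((ℓ:ℝ)-δ) + 1) * Real.logb 2 x :=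
        mul_le_mul_of_nonneg_right hKle hL0
      _ ≤ (m:ℝ)^((ℓ:ℝ)-δ/2) + Real.logb 2 C := hanal m
  calc (Nat.card { S : Set (Fin r → X) | ∃ G ∈ F, G ∩ 𝔸 = S } : ℝ)
      ≤ (((N+1)^(K+1) : ℕ) : ℝ) := by exact_mod_cast hcount
    _ ≤ x^(K+1) := hstep1
    _ = (2:ℝ)^((((K+1):ℕ):ℝ) * Real.logb 2 x) := hlogid
    _ ≤ (2:ℝ)^((m:ℝ)^((ℓ:ℝ)-δ/2) + Real.logb 2 C) :=
        Real.rpow_le_rpow_of_exponent_le (by norm_num) hexpb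
    _ = C * 2^((m:ℝ)^((ℓ:ℝ)-δ/2)) := by
        rw [Real.rpow_add (by norm_num : (0:ℝ) < 2), Real.rpow_logb (by norm_num) (by norm_num)
          (by linarith : (0:ℝ) < C)]
        ring

end PaperVC
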